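/- Let M = (E,r) be a polymatroid, a ∈ E, and let k̲ and k̄ be the minimum and maximum of the coordinate x_a over x ∈ P(M); for integers k̲ ≤ k ≤ k̄ let N_k = {x ∈ P(M) : x_a = k}. Assume k̲ < k̄. Then for all nonnegative integers t, u, the set (P(M) + uΔ + t∇) ∩ ℤ^E is the disjoint union of the following sets: (N_{k̄} + uΔ + t∇') ∩ ℤ^E; the sets (N_k + uΔ' + t∇') ∩ ℤ^E for each integer k with k̲ < k < k̄; and (N_{k̲} + uΔ' + t∇) ∩ ℤ^E. -/

import Mathlib

open scoped Pointwise
open Finset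

noncomputable section

/-- The standard simplex `Δ = conv{e_i : i ∈ E}` in `ℝ^E`. -/
def stdSimplexSet (α : Type*) [Fintype α] [DecidableEq α] : Set (α → ℝ) :=
  convexHull ℝ {x : α → ℝ | ∃ i : α, x = Pi.single i (1 : ℝ)}

/-- The number of lattice points (points of `ℤ^E`) in a subset of `ℝ^E`. -/
def latticeCount {α : Type*} (P : Set (α → ℝ)) : ℕ :=
  Set.ncard {q : α → ℤ | (fun i => (q i : ℝ)) ∈ P}

/-- `Qcount P t u` is the number of lattice points of `P + uΔ + t∇`. -/
def Qcount {α : Type*} [Fintype α] [DecidableEq α] (P : Set (α → ℝ)) (t u : ℕ) : ℕ :=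
  latticeCount (P + (u : ℝ) • stdSimplexSet α + (t : ℝ) • (-stdSimplexSet α))

/-- A polymatroid on a finite ground set, given by its rank function. -/
structure PolyMatroid (α : Type*) [Fintype α] [DecidableEq α] where
  rk : Finset α → ℕ
  rk_empty : rk ∅ = 0
  rk_mono : ∀ ⦃S T : Finset α⦄, S ⊆ T → rk S ≤ rk T
  rk_submod : ∀ S T : Finset α, rk (S ∪ T) + rk (S ∩ T) ≤ rk S + rk T

variable {α : Type*} [Fintype α] [DecidableEq α]

/-- A basis of a matroid (an independent spanning set). -/
def PolyMatroid.IsBasis (M : PolyMatroid α) (B : Finset α) : Prop :=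
  M.rk B = B.card ∧ M.rk B = M.rk Finset.univ

/-- The indicator vector of a finite set. -/
def indicatorVec {α : Type*} [DecidableEq α] (B : Finset α) : α → ℝ :=
  fun i => if i ∈ B then 1 else 0

/-- The base polytope of a matroid: the convex hull of indicator vectors of bases. -/
def matroidPolytope (M : PolyMatroid α) : Set (α → ℝ) :=
  convexHull ℝ {x : α → ℝ | ∃ B : Finset α, M.IsBasis B ∧ x = indicatorVec B}

/-- The base polytope of a polymatroid, by its inequality description. -/
def PolyMatroid.polytope (M : PolyMatroid α) : Set (α → ℝ) :=
  {x | (∑ i, x i) = (M.rk Finset.univ : ℝ) ∧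
    ∀ S : Finset α, (∑ i ∈ S, x i) ≤ (M.rk S : ℝ)}

/-- `c : ℕ × ℕ → ℤ` is a `Q'`-datum for the counting function `Q` if it is finitely
supported and interpolates `Q` in the binomial basis. -/
def IsQdatumFun (Q : ℕ → ℕ → ℕ) (c : ℕ × ℕ → ℤ) : Prop :=
  (Function.support c).Finite ∧
    ∀ t u : ℕ, (Q t u : ℤ) = ∑ᶠ p : ℕ × ℕ, c p * (t.choose p.1 : ℤ) * (u.choose p.2 : ℤ)

/-- A `Q'`-datum for the lattice-point counting function of the polytope `P`. -/
def IsQdatum (P : Set (α → ℝ)) (c : ℕ × ℕ → ℤ) : Prop :=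
  IsQdatumFun (Qcount P) c

/-- The polynomial `Q'` associated to a `Q'`-datum, as a function on `ℚ × ℚ`. -/
def Qprime (c : ℕ × ℕ → ℤ) (x y : ℚ) : ℚ :=
  ∑ᶠ p : ℕ × ℕ, (c p : ℚ) * (x - 1) ^ p.1 * (y - 1) ^ p.2

/-- The polynomial `Q'` associated to a `Q'`-datum, as a polynomial in two variables. -/
def QprimePoly (c : ℕ × ℕ → ℤ) : MvPolynomial (Fin 2) ℤ :=
  ∑ᶠ p : ℕ × ℕ,
    MvPolynomial.C (c p) * (MvPolynomial.X 0 - 1) ^ p.1 * (MvPolynomial.X 1 - 1) ^ p.2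

/-- The Tutte polynomial of a matroid, as a function on `ℚ × ℚ`. -/
def TuttePoly (M : PolyMatroid α) (x y : ℚ) : ℚ :=
  ∑ S : Finset α,
    (x - 1) ^ (M.rk Finset.univ - M.rk S) * (y - 1) ^ (S.card - M.rk S)


variable {α : Type*} [Fintype α] [DecidableEq α]

/-- The simplex `Δ' = conv{e_i : i ∈ E, i ≠ a}` in `ℝ^E`. -/
def stdSimplexAway (α : Type*) [Fintype α] [DecidableEq α] (a : α) : Set (α → ℝ) :=
  convexHull ℝ {x : α → ℝ | ∃ i : α, i ≠ a ∧ x = Pi.single i (1 : ℝ)}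

/-- The `a`-slice `N_k = {x ∈ P(M) : x_a = k}` of the base polytope. -/
def PolyMatroid.slice (M : PolyMatroid α) (a : α) (k : ℤ) : Set (α → ℝ) :=
  {x ∈ M.polytope | x a = (k : ℝ)}

set_option linter.unusedSectionVars false

section AuxDev

section Base

variable {α : Type*} [Fintype α] [DecidableEq α]

/-- Submodularity of a set function. -/
def Submod (g : Finset α → ℝ) : Prop :=
  ∀ S T : Finset α, g (S ∪ T) + g (S ∩ T) ≤ g S + g T

/-- The base polytope of a set function. -/
def basePoly (g : Finset α → ℝ) : Set (α → ℝ) :=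
  {x | (∑ i, x i) = g Finset.univ ∧ ∀ S : Finset α, (∑ i ∈ S, x i) ≤ g S}

/-- Prefix sets of an enumeration. -/
def prefixSet (e : Fin (Fintype.card α) ≃ α) (m : ℕ) : Finset α :=
  Finset.univ.filter (fun i => ((e.symm i : Fin (Fintype.card α)) : ℕ) < m)

lemma prefixSet_zero (e : Fin (Fintype.card α) ≃ α) : prefixSet e 0 = ∅ := by
  simp [prefixSet]

lemma prefixSet_top (e : Fin (Fintype.card α) ≃ α) {m : ℕ} (hm : Fintype.card α ≤ m) :
    prefixSet e m = Finset.univ := by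
  ext i; simp only [prefixSet, mem_filter, mem_univ, true_and, iff_true]
  exact lt_of_lt_of_le (e.symm i).isLt hm

lemma mem_prefixSet {e : Fin (Fintype.card α) ≃ α} {m : ℕ} {i : α} :
    i ∈ prefixSet e m ↔ ((e.symm i : Fin (Fintype.card α)) : ℕ) < m := by
  simp [prefixSet]

lemma prefixSet_succ (e : Fin (Fintype.card α) ≃ α) (j : Fin (Fintype.card α)) :
    prefixSet e ((j : ℕ) + 1) = insert (e j) (prefixSet e (j : ℕ)) := by
  ext i
  simp only [mem_prefixSet, mem_insert, Nat.lt_succ_iff]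
  constructor
  · intro h
    rcases eq_or_lt_of_le h with h | h
    · left
      have : e.symm i = j := Fin.ext h
      rw [← this, Equiv.apply_symm_apply]
    · right; exact h
  · rintro (rfl | h)
    · simp
    · exact le_of_lt h

lemma not_mem_prefixSet_self (e : Fin (Fintype.card α) ≃ α) (j : Fin (Fintype.card α)) :
    e j ∉ prefixSet e (j : ℕ) := by
  simp [mem_prefixSet]

/-- The greedy point for an enumeration `e` and set function `g`. -/
def greedyPt (e : Fin (Fintype.card α) ≃ α) (g : Finset α → ℝ) : α → ℝ :=
  fun i => g (prefixSet e ((e.symm i : ℕ) + 1)) - g (prefixSet e (e.symm i : ℕ))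

lemma greedyPt_add (e : Fin (Fintype.card α) ≃ α) (g₁ g₂ : Finset α → ℝ) :
    greedyPt e (fun S => g₁ S + g₂ S) = fun i => greedyPt e g₁ i + greedyPt e g₂ i := by
  funext i; simp [greedyPt]; ring

lemma greedyPt_sum_univ (e : Fin (Fintype.card α) ≃ α) (g : Finset α → ℝ) (hg0 : g ∅ = 0) :
    ∑ i, greedyPt e g i = g Finset.univ := by
  rw [← Equiv.sum_comp e (greedyPt e g)]
  have : ∀ j : Fin (Fintype.card α), greedyPt e g (e j)
      = g (prefixSet e ((j : ℕ) + 1)) - g (prefixSet e (j : ℕ)) := by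
    intro j; simp [greedyPt]
  rw [Fintype.sum_congr _ _ this, Fin.sum_univ_eq_sum_range
    (fun j => g (prefixSet e (j + 1)) - g (prefixSet e j)),
    Finset.sum_range_sub (fun j => g (prefixSet e j)) (Fintype.card α)]
  rw [prefixSet_zero, prefixSet_top e le_rfl, hg0, sub_zero]

lemma greedyPt_sum_le (e : Fin (Fintype.card α) ≃ α) (g : Finset α → ℝ)
    (hg : Submod g) (hg0 : g ∅ = 0) (S : Finset α) :
    ∑ i ∈ S, greedyPt e g i ≤ g S := by
  induction S using Finset.strongInduction with
  | _ S ih =>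
    rcases S.eq_empty_or_nonempty with rfl | hS
    · simp [hg0]
    · obtain ⟨i₀, hi₀S, hi₀⟩ := S.exists_max_image (fun i => e.symm i) hS
      set j : Fin (Fintype.card α) := e.symm i₀ with hj
      have hei : e j = i₀ := by rw [hj, Equiv.apply_symm_apply]
      have hsub : S ⊆ prefixSet e ((j : ℕ) + 1) := by
        intro i hi
        rw [mem_prefixSet]
        exact Nat.lt_succ_of_le (hi₀ i hi)
      have hcap : S ∩ prefixSet e (j : ℕ) = S.erase i₀ := by
        ext i
        simp only [mem_inter, mem_prefixSet, mem_erase]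
        constructor
        · rintro ⟨hiS, hlt⟩
          refine ⟨fun h => ?_, hiS⟩
          subst h; simp [hj] at hlt
        · rintro ⟨hne, hiS⟩
          refine ⟨hiS, lt_of_le_of_ne (hi₀ i hiS) ?_⟩
          intro h
          have h2 : e.symm i = j := Fin.ext h
          apply hne
          have := congrArg e h2
          rwa [Equiv.apply_symm_apply, hei] at this
      have hcup : S ∪ prefixSet e (j : ℕ) = prefixSet e ((j : ℕ) + 1) := by
        apply subset_antisymm
        · exact union_subset hsub (by rw [prefixSet_succ]; exact subset_insert _ _)
        · rw [prefixSet_succ, hei]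
          exact insert_subset (mem_union_left _ hi₀S) (subset_union_right)
      have hsm := hg S (prefixSet e (j : ℕ))
      rw [hcup, hcap] at hsm
      have ihe := ih (S.erase i₀) (erase_ssubset hi₀S)
      have hsum : ∑ i ∈ S, greedyPt e g i
          = ∑ i ∈ S.erase i₀, greedyPt e g i + greedyPt e g i₀ :=
        (Finset.sum_erase_add _ _ hi₀S).symm
      have hv : greedyPt e g i₀ = g (prefixSet e ((j : ℕ) + 1)) - g (prefixSet e (j : ℕ)) := by
        simp [greedyPt, hj]
      rw [hsum, hv]
      linarith

lemma greedyPt_mem (e : Fin (Fintype.card α) ≃ α) (g : Finset α → ℝ)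
    (hg : Submod g) (hg0 : g ∅ = 0) : greedyPt e g ∈ basePoly g :=
  ⟨greedyPt_sum_univ e g hg0, greedyPt_sum_le e g hg hg0⟩

end Base

set_option linter.unusedSectionVars false

section Greedy
variable {α : Type*} [Fintype α] [DecidableEq α]

lemma abel_ineq (W D : ℕ → ℝ) (n : ℕ) (hn : 1 ≤ n) (hW : ∀ j, W (j + 1) ≤ W j)
    (hD0 : D 0 = 0) (hD : ∀ j, 0 ≤ D j) :
    W (n - 1) * D n ≤ ∑ j ∈ range n, W j * (D (j + 1) - D j) := by
  induction n with
  | zero => omega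
  | succ n ih =>
    rcases Nat.eq_or_lt_of_le hn with h | h
    · simp [← h, hD0]
    · have hn' : 1 ≤ n := by omega
      have ihn := ih hn'
      rw [Finset.sum_range_succ]
      have h1 : W n ≤ W (n - 1) := by
        have := hW (n - 1)
        rwa [Nat.sub_add_cancel hn'] at this
      have h2 : 0 ≤ (W (n - 1) - W n) * D n := by
        apply mul_nonneg (by linarith) (hD n)
      have : (n + 1) - 1 = n := by omega
      rw [this]
      nlinarith [ihn]

lemma greedy_opt [Nonempty α] (e : Fin (Fintype.card α) ≃ α) (g : Finset α → ℝ)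
    (hg0 : g ∅ = 0)
    (w : α → ℝ) (hw : ∀ j j' : Fin (Fintype.card α), j ≤ j' → w (e j') ≤ w (e j))
    (x : α → ℝ) (hx : x ∈ basePoly g) :
    ∑ i, w i * x i ≤ ∑ i, w i * greedyPt e g i := by
  have hn1 : 1 ≤ Fintype.card α := Fintype.card_pos
  set D : ℕ → ℝ := fun m => g (prefixSet e m) - ∑ i ∈ prefixSet e m, x i with hD
  set W : ℕ → ℝ := fun m => w (e ⟨min m (Fintype.card α - 1), by omega⟩) with hW
  have hWanti : ∀ j, W (j + 1) ≤ W j := by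
    intro j
    simp only [hW]
    apply hw
    simp only [Fin.mk_le_mk]
    exact min_le_min (by omega) le_rfl
  have hD0 : D 0 = 0 := by simp [hD, prefixSet_zero, hg0]
  have hDpos : ∀ j, 0 ≤ D j := by
    intro j; simp only [hD, sub_nonneg]; exact hx.2 _
  have hDn : D (Fintype.card α) = 0 := by
    simp only [hD, prefixSet_top e le_rfl]
    rw [hx.1]; ring
  have key : ∀ j : Fin (Fintype.card α), w (e j) * (greedyPt e g (e j) - x (e j))
      = W (j : ℕ) * (D ((j : ℕ) + 1) - D (j : ℕ)) := by
    intro j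
    have h1 : W (j : ℕ) = w (e j) := by
      have hle : (j : ℕ) ≤ Fintype.card α - 1 := by omega
      have hfin : (⟨min (j : ℕ) (Fintype.card α - 1), by omega⟩ : Fin (Fintype.card α)) = j :=
        Fin.ext (by simp [Nat.min_eq_left hle])
      simp only [hW, hfin]
    have h2 : D ((j : ℕ) + 1) - D (j : ℕ) = greedyPt e g (e j) - x (e j) := by
      simp only [hD, greedyPt, Equiv.symm_apply_apply]
      rw [prefixSet_succ, Finset.sum_insert (not_mem_prefixSet_self e j)]
      ring
    rw [h1, h2]
  have habel := abel_ineq W D (Fintype.card α) hn1 hWanti hD0 hDpos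
  rw [hDn, mul_zero] at habel
  have hsum : ∑ j ∈ range (Fintype.card α), W j * (D (j + 1) - D j)
      = ∑ i, w i * (greedyPt e g i - x i) := by
    rw [← Fin.sum_univ_eq_sum_range (fun j => W j * (D (j + 1) - D j)) (Fintype.card α)]
    rw [← Equiv.sum_comp e (fun i => w i * (greedyPt e g i - x i))]
    exact Finset.sum_congr rfl (fun j _ => (key j).symm)
  rw [hsum] at habel
  have hthis : ∑ i, w i * (greedyPt e g i - x i)
      = ∑ i, w i * greedyPt e g i - ∑ i, w i * x i := by
    rw [← Finset.sum_sub_distrib]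
    exact Finset.sum_congr rfl (fun i _ => by ring)
  linarith [habel, hthis]
lemma exists_sorted_equiv (w : α → ℝ) :
    ∃ e : Fin (Fintype.card α) ≃ α,
      ∀ j j' : Fin (Fintype.card α), j ≤ j' → w (e j') ≤ w (e j) := by
  set e0 : Fin (Fintype.card α) ≃ α := (Fintype.equivFin α).symm
  set f : Fin (Fintype.card α) → ℝ := fun j => -w (e0 j) with hf
  refine ⟨(Tuple.sort f).trans e0, fun j j' hjj => ?_⟩
  have := Tuple.monotone_sort f hjj
  simp only [Function.comp_apply, hf, neg_le_neg_iff] at this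
  simpa using this
end Greedy

section Mink
variable {α : Type*} [Fintype α] [DecidableEq α]

lemma basePoly_convex (g : Finset α → ℝ) : Convex ℝ (basePoly g) := by
  rintro x hx y hy a b ha hb hab
  constructor
  · have : ∑ i, (a • x + b • y) i = a * ∑ i, x i + b * ∑ i, y i := by
      simp only [Pi.add_apply, Pi.smul_apply, smul_eq_mul]
      rw [Finset.sum_add_distrib, Finset.mul_sum, Finset.mul_sum]
    rw [this, hx.1, hy.1, ← add_mul, hab, one_mul]
  · intro S
    have : ∑ i ∈ S, (a • x + b • y) i = a * ∑ i ∈ S, x i + b * ∑ i ∈ S, y i := by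
      simp only [Pi.add_apply, Pi.smul_apply, smul_eq_mul]
      rw [Finset.sum_add_distrib, Finset.mul_sum, Finset.mul_sum]
    rw [this]
    calc a * ∑ i ∈ S, x i + b * ∑ i ∈ S, y i ≤ a * g S + b * g S := by
          have := hx.2 S; have := hy.2 S
          apply add_le_add <;> apply mul_le_mul_of_nonneg_left <;> first
            | exact hx.2 S | exact hy.2 S | exact ha | exact hb
      _ = g S := by rw [← add_mul, hab, one_mul]

lemma basePoly_isClosed (g : Finset α → ℝ) : IsClosed (basePoly g) := by
  have h1 : IsClosed {x : α → ℝ | ∑ i, x i = g Finset.univ} :=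
    isClosed_eq (by continuity) continuous_const
  have h2 : IsClosed (⋂ S : Finset α, {x : α → ℝ | ∑ i ∈ S, x i ≤ g S}) :=
    isClosed_iInter (fun S => isClosed_le (by continuity) continuous_const)
  have : basePoly g = {x : α → ℝ | ∑ i, x i = g Finset.univ} ∩
      ⋂ S : Finset α, {x : α → ℝ | ∑ i ∈ S, x i ≤ g S} := by
    ext x
    simp only [basePoly, Set.mem_setOf_eq, Set.mem_inter_iff, Set.mem_iInter]
  rw [this]
  exact h1.inter h2

lemma basePoly_isCompact (g : Finset α → ℝ) : IsCompact (basePoly g) := by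
  apply Metric.isCompact_of_isClosed_isBounded (basePoly_isClosed g)
  rw [Metric.isBounded_iff_subset_closedBall 0]
  refine ⟨|g Finset.univ| + ∑ i, (|g {i}| + |g (Finset.univ.erase i)|), fun x hx => ?_⟩
  rw [Metric.mem_closedBall, dist_zero_right]
  have hCnn : ∀ i : α, |g {i}| + |g (Finset.univ.erase i)|
      ≤ ∑ i, (|g {i}| + |g (Finset.univ.erase i)|) := by
    intro i
    apply Finset.single_le_sum (fun j _ => by positivity) (Finset.mem_univ i)
  rw [pi_norm_le_iff_of_nonneg (by positivity)]
  intro i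
  rw [Real.norm_eq_abs, abs_le]
  have hub : x i ≤ g {i} := by
    have := hx.2 {i}
    simpa using this
  have hlb : g Finset.univ - g (Finset.univ.erase i) ≤ x i := by
    have h1 := hx.2 (Finset.univ.erase i)
    have h2 : ∑ j ∈ Finset.univ.erase i, x j + x i = ∑ j, x j :=
      Finset.sum_erase_add _ _ (Finset.mem_univ i)
    rw [hx.1] at h2
    linarith
  have f1 : -|g Finset.univ| ≤ g Finset.univ := neg_abs_le _
  have f2 : g (Finset.univ.erase i) ≤ |g (Finset.univ.erase i)| := le_abs_self _
  have f3 : (0:ℝ) ≤ |g {i}| := abs_nonneg _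
  have f4 : g {i} ≤ |g {i}| := le_abs_self _
  have f5 : (0:ℝ) ≤ |g (Finset.univ.erase i)| := abs_nonneg _
  have f6 : (0:ℝ) ≤ |g Finset.univ| := abs_nonneg _
  have f7 := hCnn i
  constructor
  · linarith
  · linarith

end Mink

section Mink2
variable {α : Type*} [Fintype α] [DecidableEq α]

theorem basePoly_add_subset [Nonempty α] (g₁ g₂ : Finset α → ℝ)
    (hg₁ : Submod g₁) (h₁0 : g₁ ∅ = 0) (hg₂ : Submod g₂) (h₂0 : g₂ ∅ = 0) :
    basePoly (fun S => g₁ S + g₂ S) ⊆ basePoly g₁ + basePoly g₂ := by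
  intro x hx
  by_contra hxS
  have hconv : Convex ℝ (basePoly g₁ + basePoly g₂) :=
    (basePoly_convex g₁).add (basePoly_convex g₂)
  have hclosed : IsClosed (basePoly g₁ + basePoly g₂) :=
    ((basePoly_isCompact g₁).add (basePoly_isCompact g₂)).isClosed
  obtain ⟨f, c, hfS, hcx⟩ := geometric_hahn_banach_closed_point hconv hclosed hxS
  set w : α → ℝ := fun i => f (fun j => if i = j then (1:ℝ) else 0) with hw
  have hf : ∀ y : α → ℝ, f y = ∑ i, w i * y i := by
    intro y
    conv_lhs => rw [pi_eq_sum_univ y]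
    rw [map_sum]
    exact Finset.sum_congr rfl fun i _ => by
      rw [map_smul]; simp [hw, mul_comm]
  obtain ⟨e, he⟩ := exists_sorted_equiv w
  have hsub : Submod (fun S => g₁ S + g₂ S) := fun S T => by
    have h1 := hg₁ S T; have h2 := hg₂ S T; simp only; linarith
  have h0 : (fun S => g₁ S + g₂ S) ∅ = 0 := by simp [h₁0, h₂0]
  have hopt := greedy_opt e (fun S => g₁ S + g₂ S) h0 w he x hx
  have hmem : greedyPt e g₁ + greedyPt e g₂ ∈ basePoly g₁ + basePoly g₂ :=
    Set.add_mem_add (greedyPt_mem e g₁ hg₁ h₁0) (greedyPt_mem e g₂ hg₂ h₂0)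
  have hlt := hfS _ hmem
  have hle : f x ≤ f (greedyPt e g₁ + greedyPt e g₂) := by
    rw [hf, hf]
    calc ∑ i, w i * x i
        ≤ ∑ i, w i * greedyPt e (fun S => g₁ S + g₂ S) i := hopt
      _ = ∑ i, w i * (greedyPt e g₁ + greedyPt e g₂) i := by
          rw [greedyPt_add e g₁ g₂]; rfl
  linarith

end Mink2

section Fns
variable {α : Type*} [Fintype α] [DecidableEq α]

lemma Submod.add {g₁ g₂ : Finset α → ℝ} (h₁ : Submod g₁) (h₂ : Submod g₂) :
    Submod (fun S => g₁ S + g₂ S) := fun S T => by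
  have := h₁ S T; have := h₂ S T; simp only; linarith

lemma Submod.comp {g : Finset α → ℝ} (hg : Submod g) (φ : Finset α → Finset α)
    (hU : ∀ S T, φ (S ∪ T) = φ S ∪ φ T) (hI : ∀ S T, φ (S ∩ T) = φ S ∩ φ T) :
    Submod (fun S => g (φ S)) := fun S T => by
  simp only [hU, hI]; exact hg _ _

/-- submodular function whose base polytope is `uΔ`. -/
def fdel (u : ℝ) : Finset α → ℝ := fun S => if S = ∅ then 0 else u

/-- submodular function whose base polytope is `uΔ'`. -/
def fdel' (u : ℝ) (a : α) : Finset α → ℝ := fun S => fdel u (S.erase a)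

/-- submodular function whose base polytope is `t∇`. -/
def fnab (t : ℝ) : Finset α → ℝ := fun S => if S = Finset.univ then -t else 0

/-- submodular function whose base polytope is `t∇'`. -/
def fnab' (t : ℝ) (a : α) : Finset α → ℝ := fun S => fnab t (insert a S)

lemma fdel_submod {u : ℝ} (hu : 0 ≤ u) : Submod (fdel (α := α) u) := by
  intro S T
  unfold fdel
  rcases S.eq_empty_or_nonempty with rfl | hS
  · simp
  rcases T.eq_empty_or_nonempty with rfl | hT
  · simp
  have h1 : S ∪ T ≠ ∅ := by
    simp only [ne_eq, Finset.union_eq_empty]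
    exact fun h => hS.ne_empty h.1
  rw [if_neg h1, if_neg hS.ne_empty, if_neg hT.ne_empty]
  by_cases h2 : S ∩ T = ∅ <;> simp [h2, hu]

lemma fdel'_submod {u : ℝ} (hu : 0 ≤ u) (a : α) : Submod (fdel' (α := α) u a) :=
  (fdel_submod hu).comp _ (fun S T => Finset.erase_union_distrib S T a)
    (fun S T => by ext x; simp only [Finset.mem_erase, Finset.mem_inter]; tauto)

lemma fnab_submod {t : ℝ} (ht : 0 ≤ t) : Submod (fnab (α := α) t) := by
  intro S T
  unfold fnab
  by_cases hI : S ∩ T = Finset.univ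
  · have hS : S = Finset.univ := by
      have := Finset.inter_subset_left (s₁ := S) (s₂ := T)
      rw [hI] at this
      exact Finset.univ_subset_iff.mp this
    have hT : T = Finset.univ := by
      have := Finset.inter_subset_right (s₁ := S) (s₂ := T)
      rw [hI] at this
      exact Finset.univ_subset_iff.mp this
    simp [hS, hT]
  · rw [if_neg hI]
    by_cases hU : S ∪ T = Finset.univ
    · rw [if_pos hU]
      by_cases hS : S = Finset.univ
      · have hT : T ≠ Finset.univ := fun h => hI (by rw [hS, h]; simp)
        simp [hS, hT]
      · by_cases hT : T = Finset.univ <;> simp [hS, hT] <;> linarith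
    · rw [if_neg hU]
      by_cases hS : S = Finset.univ
      · exact absurd (by rw [hS]; simp) hU
      by_cases hT : T = Finset.univ
      · exact absurd (by rw [hT]; simp) hU
      simp [hS, hT]

lemma fnab'_submod {t : ℝ} (ht : 0 ≤ t) (a : α) : Submod (fnab' (α := α) t a) :=
  (fnab_submod ht).comp _ (fun S T => Finset.insert_union_distrib a S T)
    (fun S T => Finset.insert_inter_distrib S T a)

end Fns

section Fsl
variable {α : Type*} [Fintype α] [DecidableEq α]

/-- real-valued rank. -/
def frk (M : PolyMatroid α) : Finset α → ℝ := fun S => (M.rk S : ℝ)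

lemma frk_submod (M : PolyMatroid α) : Submod (frk M) := fun S T => by
  have := M.rk_submod S T
  unfold frk
  push_cast
  exact_mod_cast this

lemma frk_mono (M : PolyMatroid α) {S T : Finset α} (h : S ⊆ T) : frk M S ≤ frk M T := by
  unfold frk; exact_mod_cast M.rk_mono h

/-- submodular function whose base polytope is the slice `N_k`. -/
def fsl (M : PolyMatroid α) (a : α) (k : ℝ) : Finset α → ℝ := fun S =>
  if a ∈ S then min (frk M S) (frk M (S.erase a) + k)
  else min (frk M S) (frk M (insert a S) - k)

lemma fsl_submod_aux (M : PolyMatroid α) (a : α) (k : ℝ) {S T : Finset α}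
    (haS : a ∈ S) (haT : a ∉ T) :
    fsl M a k (S ∪ T) + fsl M a k (S ∩ T) ≤ fsl M a k S + fsl M a k T := by
  have haU : a ∈ S ∪ T := Finset.mem_union_left _ haS
  have haI : a ∉ S ∩ T := fun h => haT (Finset.mem_inter.mp h).2
  rw [fsl, fsl, fsl, fsl, if_pos haS, if_neg haT, if_pos haU, if_neg haI]
  have e1 : S.erase a ∪ T = (S ∪ T).erase a := by
    ext x; simp only [Finset.mem_erase, Finset.mem_union]
    constructor
    · rintro (⟨h1, h2⟩ | h); exact ⟨h1, Or.inl h2⟩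
      exact ⟨fun hxa => haT (hxa ▸ h), Or.inr h⟩
    · rintro ⟨h1, h2 | h3⟩; exact Or.inl ⟨h1, h2⟩; exact Or.inr h3
  have e2 : S.erase a ∩ T = S ∩ T := by
    ext x; simp only [Finset.mem_erase, Finset.mem_inter]
    constructor
    · rintro ⟨⟨_, h2⟩, h3⟩; exact ⟨h2, h3⟩
    · rintro ⟨h2, h3⟩; exact ⟨⟨fun hxa => haT (hxa ▸ h3), h2⟩, h3⟩
  have e3 : S ∪ insert a T = S ∪ T := by
    ext x; simp only [Finset.mem_union, Finset.mem_insert]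
    constructor
    · rintro (h | rfl | h); exact Or.inl h; exact Or.inl haS; exact Or.inr h
    · rintro (h | h); exact Or.inl h; exact Or.inr (Or.inr h)
  have e4 : S ∩ insert a T = insert a (S ∩ T) := by
    ext x; simp only [Finset.mem_inter, Finset.mem_insert]
    constructor
    · rintro ⟨h1, rfl | h2⟩; exact Or.inl rfl; exact Or.inr ⟨h1, h2⟩
    · rintro (rfl | ⟨h1, h2⟩); exact ⟨haS, Or.inl rfl⟩; exact ⟨h1, Or.inr h2⟩
  have e5 : S.erase a ∪ insert a T = S ∪ T := by
    ext x; simp only [Finset.mem_erase, Finset.mem_union, Finset.mem_insert]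
    constructor
    · rintro (⟨h1, h2⟩ | rfl | h); exact Or.inl h2; exact Or.inl haS; exact Or.inr h
    · rintro (h | h)
      · rcases eq_or_ne x a with rfl | hxa
        · exact Or.inr (Or.inl rfl)
        · exact Or.inl ⟨hxa, h⟩
      · exact Or.inr (Or.inr h)
  have e6 : S.erase a ∩ insert a T = S ∩ T := by
    ext x; simp only [Finset.mem_erase, Finset.mem_inter, Finset.mem_insert]
    constructor
    · rintro ⟨⟨h1, h2⟩, rfl | h3⟩; exact absurd rfl h1; exact ⟨h2, h3⟩
    · rintro ⟨h1, h2⟩; exact ⟨⟨fun hxa => haT (hxa ▸ h2), h1⟩, Or.inr h2⟩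
  have hsm1 := frk_submod M S T
  have hsm2 := frk_submod M S (insert a T)
  have hsm3 := frk_submod M (S.erase a) T
  have hsm4 := frk_submod M (S.erase a) (insert a T)
  rw [e3, e4] at hsm2
  rw [e1, e2] at hsm3
  rw [e5, e6] at hsm4
  rcases le_total (frk M S) (frk M (S.erase a) + k) with h1 | h1 <;>
    rcases le_total (frk M T) (frk M (insert a T) - k) with h2 | h2
  · rw [min_eq_left h1, min_eq_left h2]
    have b1 : min (frk M (S ∪ T)) (frk M ((S ∪ T).erase a) + k) ≤ frk M (S ∪ T) :=
      min_le_left _ _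
    have b2 : min (frk M (S ∩ T)) (frk M (insert a (S ∩ T)) - k) ≤ frk M (S ∩ T) :=
      min_le_left _ _
    linarith
  · rw [min_eq_left h1, min_eq_right h2]
    have b1 : min (frk M (S ∪ T)) (frk M ((S ∪ T).erase a) + k) ≤ frk M (S ∪ T) :=
      min_le_left _ _
    have b2 : min (frk M (S ∩ T)) (frk M (insert a (S ∩ T)) - k)
        ≤ frk M (insert a (S ∩ T)) - k := min_le_right _ _
    linarith
  · rw [min_eq_right h1, min_eq_left h2]
    have b1 : min (frk M (S ∪ T)) (frk M ((S ∪ T).erase a) + k)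
        ≤ frk M ((S ∪ T).erase a) + k := min_le_right _ _
    have b2 : min (frk M (S ∩ T)) (frk M (insert a (S ∩ T)) - k) ≤ frk M (S ∩ T) :=
      min_le_left _ _
    linarith
  · rw [min_eq_right h1, min_eq_right h2]
    have b1 : min (frk M (S ∪ T)) (frk M ((S ∪ T).erase a) + k) ≤ frk M (S ∪ T) :=
      min_le_left _ _
    have b2 : min (frk M (S ∩ T)) (frk M (insert a (S ∩ T)) - k) ≤ frk M (S ∩ T) :=
      min_le_left _ _
    linarith

end Fsl

section Fsl2
variable {α : Type*} [Fintype α] [DecidableEq α]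

lemma fsl_submod_bothin (M : PolyMatroid α) (a : α) (k : ℝ) {S T : Finset α}
    (haS : a ∈ S) (haT : a ∈ T) :
    fsl M a k (S ∪ T) + fsl M a k (S ∩ T) ≤ fsl M a k S + fsl M a k T := by
  have haU : a ∈ S ∪ T := Finset.mem_union_left _ haS
  have haI : a ∈ S ∩ T := Finset.mem_inter.mpr ⟨haS, haT⟩
  rw [fsl, fsl, fsl, fsl, if_pos haS, if_pos haT, if_pos haU, if_pos haI]
  have e1 : S ∪ T.erase a = S ∪ T := by
    ext x; simp only [Finset.mem_erase, Finset.mem_union]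
    constructor
    · rintro (h | ⟨_, h⟩); exact Or.inl h; exact Or.inr h
    · rintro (h | h)
      · exact Or.inl h
      · rcases eq_or_ne x a with rfl | hxa
        · exact Or.inl haS
        · exact Or.inr ⟨hxa, h⟩
  have e2 : S ∩ T.erase a = (S ∩ T).erase a := by
    ext x; simp only [Finset.mem_erase, Finset.mem_inter]; tauto
  have e3 : S.erase a ∪ T = S ∪ T := by
    ext x; simp only [Finset.mem_erase, Finset.mem_union]
    constructor
    · rintro (⟨_, h⟩ | h); exact Or.inl h; exact Or.inr h
    · rintro (h | h)
      · rcases eq_or_ne x a with rfl | hxa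
        · exact Or.inr haT
        · exact Or.inl ⟨hxa, h⟩
      · exact Or.inr h
  have e4 : S.erase a ∩ T = (S ∩ T).erase a := by
    ext x; simp only [Finset.mem_erase, Finset.mem_inter]; tauto
  have e5 : S.erase a ∪ T.erase a = (S ∪ T).erase a :=
    (Finset.erase_union_distrib S T a).symm
  have e6 : S.erase a ∩ T.erase a = (S ∩ T).erase a := by
    ext x; simp only [Finset.mem_erase, Finset.mem_inter]; tauto
  have hsm1 := frk_submod M S T
  have hsm2 := frk_submod M S (T.erase a)
  have hsm3 := frk_submod M (S.erase a) T
  have hsm4 := frk_submod M (S.erase a) (T.erase a)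
  rw [e1, e2] at hsm2
  rw [e3, e4] at hsm3
  rw [e5, e6] at hsm4
  rcases le_total (frk M S) (frk M (S.erase a) + k) with h1 | h1 <;>
    rcases le_total (frk M T) (frk M (T.erase a) + k) with h2 | h2
  · rw [min_eq_left h1, min_eq_left h2]
    have b1 := min_le_left (frk M (S ∪ T)) (frk M ((S ∪ T).erase a) + k)
    have b2 := min_le_left (frk M (S ∩ T)) (frk M ((S ∩ T).erase a) + k)
    linarith
  · rw [min_eq_left h1, min_eq_right h2]
    have b1 := min_le_left (frk M (S ∪ T)) (frk M ((S ∪ T).erase a) + k)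
    have b2 := min_le_right (frk M (S ∩ T)) (frk M ((S ∩ T).erase a) + k)
    linarith
  · rw [min_eq_right h1, min_eq_left h2]
    have b1 := min_le_left (frk M (S ∪ T)) (frk M ((S ∪ T).erase a) + k)
    have b2 := min_le_right (frk M (S ∩ T)) (frk M ((S ∩ T).erase a) + k)
    linarith
  · rw [min_eq_right h1, min_eq_right h2]
    have b1 := min_le_right (frk M (S ∪ T)) (frk M ((S ∪ T).erase a) + k)
    have b2 := min_le_right (frk M (S ∩ T)) (frk M ((S ∩ T).erase a) + k)
    linarith

lemma fsl_submod_bothout (M : PolyMatroid α) (a : α) (k : ℝ) {S T : Finset α}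
    (haS : a ∉ S) (haT : a ∉ T) :
    fsl M a k (S ∪ T) + fsl M a k (S ∩ T) ≤ fsl M a k S + fsl M a k T := by
  have haU : a ∉ S ∪ T := fun h => by
    rcases Finset.mem_union.mp h with h | h; exact haS h; exact haT h
  have haI : a ∉ S ∩ T := fun h => haS (Finset.mem_inter.mp h).1
  rw [fsl, fsl, fsl, fsl, if_neg haS, if_neg haT, if_neg haU, if_neg haI]
  have e1 : S ∪ insert a T = insert a (S ∪ T) := by
    ext x; simp only [Finset.mem_insert, Finset.mem_union]; tauto
  have e2 : S ∩ insert a T = S ∩ T := by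
    ext x; simp only [Finset.mem_insert, Finset.mem_inter]
    constructor
    · rintro ⟨h1, rfl | h2⟩; exact absurd h1 haS; exact ⟨h1, h2⟩
    · rintro ⟨h1, h2⟩; exact ⟨h1, Or.inr h2⟩
  have e3 : insert a S ∪ T = insert a (S ∪ T) := by
    ext x; simp only [Finset.mem_insert, Finset.mem_union]; tauto
  have e4 : insert a S ∩ T = S ∩ T := by
    ext x; simp only [Finset.mem_insert, Finset.mem_inter]
    constructor
    · rintro ⟨rfl | h1, h2⟩; exact absurd h2 haT; exact ⟨h1, h2⟩
    · rintro ⟨h1, h2⟩; exact ⟨Or.inr h1, h2⟩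
  have e5 : insert a S ∪ insert a T = insert a (S ∪ T) := by
    ext x; simp only [Finset.mem_insert, Finset.mem_union]; tauto
  have e6 : insert a S ∩ insert a T = insert a (S ∩ T) := by
    ext x; simp only [Finset.mem_insert, Finset.mem_inter]; tauto
  have hsm1 := frk_submod M S T
  have hsm2 := frk_submod M S (insert a T)
  have hsm3 := frk_submod M (insert a S) T
  have hsm4 := frk_submod M (insert a S) (insert a T)
  rw [e1, e2] at hsm2
  rw [e3, e4] at hsm3
  rw [e5, e6] at hsm4
  rcases le_total (frk M S) (frk M (insert a S) - k) with h1 | h1 <;>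
    rcases le_total (frk M T) (frk M (insert a T) - k) with h2 | h2
  · rw [min_eq_left h1, min_eq_left h2]
    have b1 := min_le_left (frk M (S ∪ T)) (frk M (insert a (S ∪ T)) - k)
    have b2 := min_le_left (frk M (S ∩ T)) (frk M (insert a (S ∩ T)) - k)
    linarith
  · rw [min_eq_left h1, min_eq_right h2]
    have b1 := min_le_right (frk M (S ∪ T)) (frk M (insert a (S ∪ T)) - k)
    have b2 := min_le_left (frk M (S ∩ T)) (frk M (insert a (S ∩ T)) - k)
    linarith
  · rw [min_eq_right h1, min_eq_left h2]
    have b1 := min_le_right (frk M (S ∪ T)) (frk M (insert a (S ∪ T)) - k)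
    have b2 := min_le_left (frk M (S ∩ T)) (frk M (insert a (S ∩ T)) - k)
    linarith
  · rw [min_eq_right h1, min_eq_right h2]
    have b1 := min_le_right (frk M (S ∪ T)) (frk M (insert a (S ∪ T)) - k)
    have b2 := min_le_right (frk M (S ∩ T)) (frk M (insert a (S ∩ T)) - k)
    linarith

lemma fsl_submod (M : PolyMatroid α) (a : α) (k : ℝ) : Submod (fsl M a k) := by
  intro S T
  by_cases haS : a ∈ S <;> by_cases haT : a ∈ T
  · exact fsl_submod_bothin M a k haS haT
  · exact fsl_submod_aux M a k haS haT
  · have := fsl_submod_aux M a k haT haS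
    rwa [Finset.union_comm, Finset.inter_comm, add_comm (fsl M a k T)] at this
  · exact fsl_submod_bothout M a k haS haT

end Fsl2

section Simp1
variable {α : Type*} [Fintype α] [DecidableEq α]

lemma stdSimplexSet_eq : stdSimplexSet α = stdSimplex ℝ α := by
  rw [← convexHull_basis_eq_stdSimplex, stdSimplexSet]
  congr 1
  ext x
  constructor
  · rintro ⟨i, rfl⟩
    exact ⟨i, by funext j; simp [Pi.single_apply, eq_comm]⟩
  · rintro ⟨i, rfl⟩
    exact ⟨i, by funext j; simp [Pi.single_apply, eq_comm]⟩

lemma mem_stdSimplexSet_iff {x : α → ℝ} :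
    x ∈ stdSimplexSet α ↔ (∀ i, 0 ≤ x i) ∧ ∑ i, x i = 1 := by
  rw [stdSimplexSet_eq]; rfl

lemma stdSimplexAway_subset (a : α) : stdSimplexAway α a ⊆ stdSimplexSet α :=
  convexHull_mono (fun x ⟨i, _, hx⟩ => ⟨i, hx⟩)

lemma mem_stdSimplexAway_iff (a : α) {x : α → ℝ} :
    x ∈ stdSimplexAway α a ↔ (∀ i, 0 ≤ x i) ∧ ∑ i, x i = 1 ∧ x a = 0 := by
  constructor
  · intro hx
    have hconv : Convex ℝ {x : α → ℝ | (∀ i, 0 ≤ x i) ∧ ∑ i, x i = 1 ∧ x a = 0} := by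
      rintro y ⟨hy0, hy1, hya⟩ z ⟨hz0, hz1, hza⟩ p q hp hq hpq
      refine ⟨fun i => by
        have := hy0 i; have := hz0 i
        simp only [Pi.add_apply, Pi.smul_apply, smul_eq_mul]
        nlinarith, ?_, ?_⟩
      · have : ∑ i, (p • y + q • z) i = p * ∑ i, y i + q * ∑ i, z i := by
          simp only [Pi.add_apply, Pi.smul_apply, smul_eq_mul]
          rw [Finset.sum_add_distrib, Finset.mul_sum, Finset.mul_sum]
        rw [this, hy1, hz1]; linarith
      · simp only [Pi.add_apply, Pi.smul_apply, smul_eq_mul, hya, hza]; ring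
    have hgen : {x : α → ℝ | ∃ i : α, i ≠ a ∧ x = Pi.single i (1 : ℝ)} ⊆
        {x : α → ℝ | (∀ i, 0 ≤ x i) ∧ ∑ i, x i = 1 ∧ x a = 0} := by
      rintro x ⟨i, hia, rfl⟩
      refine ⟨fun j => ?_, ?_, ?_⟩
      · rw [Pi.single_apply]
        split_ifs <;> norm_num
      · simp [Pi.single_apply]
      · rw [Pi.single_apply, if_neg (fun h => hia h.symm)]
    exact convexHull_min hgen hconv hx
  · rintro ⟨h0, h1, ha⟩
    have hw : ∑ i ∈ Finset.univ.erase a, x i = 1 := by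
      have := Finset.sum_erase_add Finset.univ x (Finset.mem_univ a)
      rw [ha, add_zero] at this
      rw [this, h1]
    have hmem := Finset.centerMass_mem_convexHull (t := Finset.univ.erase a)
      (w := x) (z := fun i => Pi.single i (1 : ℝ))
      (s := {x : α → ℝ | ∃ i : α, i ≠ a ∧ x = Pi.single i (1 : ℝ)})
      (fun i _ => h0 i) (by rw [hw]; norm_num)
      (fun i hi => ⟨i, (Finset.mem_erase.mp hi).1, rfl⟩)
    have hcm : (Finset.univ.erase a).centerMass x (fun i => Pi.single i (1 : ℝ)) = x := by
      rw [Finset.centerMass, hw]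
      funext j
      simp only [inv_one, one_smul]
      rw [Finset.sum_apply]
      have : ∀ i ∈ Finset.univ.erase a, (x i • (Pi.single i (1:ℝ) : α → ℝ)) j
          = if i = j then x i else 0 := by
        intro i _
        simp [Pi.single_apply]
        split_ifs with h1 h2 h2 <;> first | rfl | (exact absurd h1.symm h2) |
          (exact absurd h2.symm h1)
      rw [Finset.sum_congr rfl this, Finset.sum_ite_eq' (Finset.univ.erase a) j x]
      by_cases hj : j ∈ Finset.univ.erase a
      · rw [if_pos hj]
      · rw [if_neg hj]
        have : j = a := by
          by_contra hja
          exact hj (Finset.mem_erase.mpr ⟨hja, Finset.mem_univ j⟩)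
        rw [this, ha]
    rw [hcm] at hmem
    exact hmem

end Simp1

section Simp2
variable {α : Type*} [Fintype α] [DecidableEq α]

lemma stdSimplexSet_nonempty [Nonempty α] : (stdSimplexSet α).Nonempty :=
  ⟨Pi.single (Classical.arbitrary α) 1,
    subset_convexHull ℝ _ ⟨Classical.arbitrary α, rfl⟩⟩

lemma stdSimplexAway_nonempty (hcard : 2 ≤ Fintype.card α) (a : α) :
    (stdSimplexAway α a).Nonempty := by
  obtain ⟨b, hb⟩ := Fintype.exists_ne_of_one_lt_card (by omega) a
  exact ⟨Pi.single b 1, subset_convexHull ℝ _ ⟨b, hb, rfl⟩⟩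

lemma mem_smul_stdSimplexSet [Nonempty α] {u : ℝ} (hu : 0 ≤ u) {x : α → ℝ} :
    x ∈ u • stdSimplexSet α ↔ (∀ i, 0 ≤ x i) ∧ ∑ i, x i = u := by
  constructor
  · rintro ⟨y, hy, rfl⟩
    rw [mem_stdSimplexSet_iff] at hy
    refine ⟨fun i => mul_nonneg hu (hy.1 i), ?_⟩
    simp only [Pi.smul_apply, smul_eq_mul]
    rw [← Finset.mul_sum, hy.2, mul_one]
  · rintro ⟨h0, hsum⟩
    rcases eq_or_lt_of_le hu with rfl | hupos
    · have hx0 : x = 0 := by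
        funext i
        exact (Finset.sum_eq_zero_iff_of_nonneg (fun j _ => h0 j)).mp hsum i (Finset.mem_univ i)
      rw [hx0, Set.zero_smul_set stdSimplexSet_nonempty]
      rfl
    · refine ⟨u⁻¹ • x, ?_, ?_⟩
      · rw [mem_stdSimplexSet_iff]
        refine ⟨fun i => mul_nonneg (by positivity) (h0 i), ?_⟩
        simp only [Pi.smul_apply, smul_eq_mul]
        rw [← Finset.mul_sum, hsum]
        field_simp
      · show u • u⁻¹ • x = x
        rw [smul_inv_smul₀ (ne_of_gt hupos)]

lemma mem_smul_stdSimplexAway (hcard : 2 ≤ Fintype.card α) (a : α) {u : ℝ} (hu : 0 ≤ u)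
    {x : α → ℝ} :
    x ∈ u • stdSimplexAway α a ↔ (∀ i, 0 ≤ x i) ∧ ∑ i, x i = u ∧ x a = 0 := by
  constructor
  · rintro ⟨y, hy, rfl⟩
    rw [mem_stdSimplexAway_iff] at hy
    refine ⟨fun i => mul_nonneg hu (hy.1 i), ?_, ?_⟩
    · simp only [Pi.smul_apply, smul_eq_mul]
      rw [← Finset.mul_sum, hy.2.1, mul_one]
    · simp only [Pi.smul_apply, smul_eq_mul, hy.2.2, mul_zero]
  · rintro ⟨h0, hsum, hxa⟩
    rcases eq_or_lt_of_le hu with rfl | hupos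
    · have hx0 : x = 0 := by
        funext i
        exact (Finset.sum_eq_zero_iff_of_nonneg (fun j _ => h0 j)).mp hsum i (Finset.mem_univ i)
      rw [hx0, Set.zero_smul_set (stdSimplexAway_nonempty hcard a)]
      rfl
    · refine ⟨u⁻¹ • x, ?_, ?_⟩
      · rw [mem_stdSimplexAway_iff]
        refine ⟨fun i => mul_nonneg (by positivity) (h0 i), ?_, ?_⟩
        · simp only [Pi.smul_apply, smul_eq_mul]
          rw [← Finset.mul_sum, hsum]
          field_simp
        · simp [hxa]
      · show u • u⁻¹ • x = x
        rw [smul_inv_smul₀ (ne_of_gt hupos)]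

lemma mem_smul_neg_iff {t : ℝ} {S : Set (α → ℝ)} {x : α → ℝ} :
    x ∈ t • (-S) ↔ -x ∈ t • S := by
  rw [Set.smul_set_neg, Set.mem_neg]

end Simp2

section Simp3
variable {α : Type*} [Fintype α] [DecidableEq α]

lemma fdel_le {u : ℝ} (hu : 0 ≤ u) (S : Finset α) : fdel u S ≤ u := by
  unfold fdel; split_ifs <;> simp [hu]

lemma fnab_nonpos {t : ℝ} (ht : 0 ≤ t) (S : Finset α) : fnab t S ≤ 0 := by
  unfold fnab; split_ifs <;> simp [ht]

lemma basePoly_fdel_subset [Nonempty α] (hcard : 2 ≤ Fintype.card α) {u : ℝ} (hu : 0 ≤ u) :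
    basePoly (fdel (α := α) u) ⊆ u • stdSimplexSet α := by
  rintro x ⟨hsum, hle⟩
  have huniv : fdel (α := α) u Finset.univ = u := by
    unfold fdel
    rw [if_neg (Finset.univ_nonempty.ne_empty)]
  rw [mem_smul_stdSimplexSet hu]
  refine ⟨fun i => ?_, by rw [hsum, huniv]⟩
  have h1 := hle (Finset.univ.erase i)
  have h2 : ∑ j ∈ Finset.univ.erase i, x j + x i = ∑ j, x j :=
    Finset.sum_erase_add _ _ (Finset.mem_univ i)
  have h3 : fdel (α := α) u (Finset.univ.erase i) ≤ u := fdel_le hu _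
  rw [hsum, huniv] at h2
  linarith

lemma basePoly_fdel'_subset (hcard : 2 ≤ Fintype.card α) (a : α) {u : ℝ} (hu : 0 ≤ u) :
    basePoly (fdel' (α := α) u a) ⊆ u • stdSimplexAway α a := by
  rintro x ⟨hsum, hle⟩
  have hne : (Finset.univ.erase a).Nonempty := by
    rw [← Finset.card_pos, Finset.card_erase_of_mem (Finset.mem_univ a), Finset.card_univ]
    omega
  have huniv : fdel' (α := α) u a Finset.univ = u := by
    unfold fdel' fdel
    rw [if_neg hne.ne_empty]
  have hxa : x a ≤ 0 := by
    have := hle {a}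
    unfold fdel' fdel at this
    rw [Finset.erase_singleton, if_pos rfl] at this
    simpa using this
  have hnn : ∀ i, 0 ≤ x i := by
    intro i
    have h1 := hle (Finset.univ.erase i)
    have h2 : ∑ j ∈ Finset.univ.erase i, x j + x i = ∑ j, x j :=
      Finset.sum_erase_add _ _ (Finset.mem_univ i)
    have h3 : fdel' (α := α) u a (Finset.univ.erase i) ≤ u := fdel_le hu _
    rw [hsum, huniv] at h2
    linarith
  rw [mem_smul_stdSimplexAway hcard a hu]
  exact ⟨hnn, by rw [hsum, huniv], le_antisymm hxa (hnn a)⟩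

lemma basePoly_fnab_subset [Nonempty α] (hcard : 2 ≤ Fintype.card α) {t : ℝ} (ht : 0 ≤ t) :
    basePoly (fnab (α := α) t) ⊆ t • (-stdSimplexSet α) := by
  rintro x ⟨hsum, hle⟩
  rw [mem_smul_neg_iff, mem_smul_stdSimplexSet ht]
  have huniv : fnab (α := α) t Finset.univ = -t := by unfold fnab; rw [if_pos rfl]
  constructor
  · intro i
    have h1 := hle {i}
    have h2 : ({i} : Finset α) ≠ Finset.univ := by
      intro h
      have := Finset.card_univ (α := α)
      rw [← h, Finset.card_singleton] at this
      omega
    unfold fnab at h1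
    rw [if_neg h2] at h1
    simp only [Finset.sum_singleton] at h1
    simp only [Pi.neg_apply]
    linarith
  · have : ∑ i, (-x) i = -∑ i, x i := by simp
    rw [this, hsum, huniv, neg_neg]

lemma basePoly_fnab'_subset (hcard : 2 ≤ Fintype.card α) (a : α) {t : ℝ} (ht : 0 ≤ t) :
    basePoly (fnab' (α := α) t a) ⊆ t • (-stdSimplexAway α a) := by
  rintro x ⟨hsum, hle⟩
  rw [mem_smul_neg_iff, mem_smul_stdSimplexAway hcard a ht]
  have huniv : fnab' (α := α) t a Finset.univ = -t := by
    unfold fnab' fnab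
    rw [if_pos (Finset.insert_eq_self.mpr (Finset.mem_univ a))]
  have hxa_le : x a ≤ 0 := by
    have h1 := hle {a}
    unfold fnab' fnab at h1
    have h2 : insert a ({a} : Finset α) ≠ Finset.univ := by
      rw [Finset.insert_eq_self.mpr (Finset.mem_singleton_self a)]
      intro h
      have := Finset.card_univ (α := α)
      rw [← h, Finset.card_singleton] at this
      omega
    rw [if_neg h2] at h1
    simpa using h1
  have hxa_ge : 0 ≤ x a := by
    have h1 := hle (Finset.univ.erase a)
    unfold fnab' fnab at h1
    rw [if_pos (Finset.insert_erase (Finset.mem_univ a))] at h1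
    have h2 : ∑ j ∈ Finset.univ.erase a, x j + x a = ∑ j, x j :=
      Finset.sum_erase_add _ _ (Finset.mem_univ a)
    rw [hsum, huniv] at h2
    linarith
  have hnp : ∀ i, x i ≤ 0 := by
    intro i
    rcases eq_or_ne i a with rfl | hia
    · exact hxa_le
    · have h1 := hle {i}
      have h3 : fnab (α := α) t (insert a {i}) ≤ 0 := fnab_nonpos ht _
      unfold fnab' at h1
      simp only [Finset.sum_singleton] at h1
      linarith
  refine ⟨fun i => by simpa using hnp i, ?_, by simpa using le_antisymm hxa_le hxa_ge⟩
  have : ∑ i, (-x) i = -∑ i, x i := by simp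
  rw [this, hsum, huniv, neg_neg]

end Simp3

section SliceSec
variable {α : Type*} [Fintype α] [DecidableEq α]

lemma basePoly_frk (M : PolyMatroid α) : basePoly (frk M) = M.polytope := rfl

lemma basePoly_fsl_subset_slice (M : PolyMatroid α) (a : α) (k : ℤ)
    (hklow : frk M Finset.univ - frk M (Finset.univ.erase a) ≤ (k : ℝ))
    (hkhigh : (k : ℝ) ≤ frk M {a}) :
    basePoly (fsl M a (k : ℝ)) ⊆ M.slice a k := by
  rintro x ⟨hsum, hle⟩
  have huniv : fsl M a (k : ℝ) Finset.univ = frk M Finset.univ := by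
    rw [fsl, if_pos (Finset.mem_univ a), min_eq_left (by linarith)]
  have hfsl_le_frk : ∀ S, fsl M a (k : ℝ) S ≤ frk M S := by
    intro S
    rw [fsl]
    split_ifs <;> exact min_le_left _ _
  have hxa_le : x a ≤ (k : ℝ) := by
    have h1 := hle {a}
    rw [fsl, if_pos (Finset.mem_singleton_self a), Finset.erase_singleton] at h1
    have h2 : frk M ∅ = 0 := by
      unfold frk; rw [M.rk_empty]; norm_num
    rw [h2, zero_add, min_eq_right hkhigh] at h1
    simpa using h1
  have hxa_ge : (k : ℝ) ≤ x a := by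
    have h1 := hle (Finset.univ.erase a)
    have hna : a ∉ Finset.univ.erase a := Finset.notMem_erase a _
    rw [fsl, if_neg hna, Finset.insert_erase (Finset.mem_univ a)] at h1
    have h2 : ∑ j ∈ Finset.univ.erase a, x j + x a = ∑ j, x j :=
      Finset.sum_erase_add _ _ (Finset.mem_univ a)
    have h3 : min (frk M (Finset.univ.erase a)) (frk M Finset.univ - (k : ℝ))
        ≤ frk M Finset.univ - (k : ℝ) := min_le_right _ _
    rw [hsum, huniv] at h2
    linarith
  exact ⟨⟨by rw [hsum, huniv]; rfl, fun S => le_trans (hle S) (hfsl_le_frk S)⟩,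
    le_antisymm hxa_le hxa_ge⟩

end SliceSec

section ClaimA
variable {α : Type*} [Fintype α] [DecidableEq α]

lemma singleton_ne_univ (hcard : 2 ≤ Fintype.card α) (a : α) :
    ({a} : Finset α) ≠ Finset.univ := by
  intro h
  have := Finset.card_univ (α := α)
  rw [← h, Finset.card_singleton] at this
  omega

lemma erase_univ_nonempty (hcard : 2 ≤ Fintype.card α) (a : α) :
    (Finset.univ.erase a).Nonempty := by
  rw [← Finset.card_pos, Finset.card_erase_of_mem (Finset.mem_univ a), Finset.card_univ]
  omega

lemma claimA_mid (M : PolyMatroid α) (a : α) (k : ℤ) {u t : ℝ} (hu : 0 ≤ u) (ht : 0 ≤ t)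
    (hcard : 2 ≤ Fintype.card α) (x p y z : α → ℝ)
    (hx : ∀ i, x i = p i + y i + z i)
    (hp1 : ∑ i, p i = frk M Finset.univ) (hp2 : ∀ S, ∑ i ∈ S, p i ≤ frk M S)
    (hy0 : ∀ i, 0 ≤ y i) (hyu : ∑ i, y i = u)
    (hz0 : ∀ i, z i ≤ 0) (hzt : ∑ i, z i = -t)
    (hklow : frk M Finset.univ - frk M (Finset.univ.erase a) ≤ (k : ℝ))
    (hkhigh : (k : ℝ) ≤ frk M {a})
    (hqa : x a = (k : ℝ)) :
    x ∈ basePoly (fun S => fsl M a (k : ℝ) S + (fdel' u a S + fnab' t a S)) := by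
  have hxS : ∀ S : Finset α, ∑ i ∈ S, x i = ∑ i ∈ S, p i + ∑ i ∈ S, y i + ∑ i ∈ S, z i := by
    intro S
    rw [← Finset.sum_add_distrib, ← Finset.sum_add_distrib]
    exact Finset.sum_congr rfl fun i _ => hx i
  have hyS_le : ∀ S : Finset α, ∑ i ∈ S, y i ≤ u := by
    intro S
    rw [← hyu]
    exact Finset.sum_le_sum_of_subset_of_nonneg (Finset.subset_univ S) (fun i _ _ => hy0 i)
  have hzS_np : ∀ S : Finset α, ∑ i ∈ S, z i ≤ 0 :=
    fun S => Finset.sum_nonpos (fun i _ => hz0 i)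
  have hQle : ∀ S, ∑ i ∈ S, x i ≤ frk M S + u := by
    intro S
    have := hp2 S; have := hyS_le S; have := hzS_np S
    rw [hxS]; linarith
  have hQuniv : ∑ i, x i = frk M Finset.univ + u - t := by
    rw [hxS, hp1, hyu, hzt]; ring
  have hfrk0 : frk M ∅ = 0 := by unfold frk; rw [M.rk_empty]; norm_num
  have hF2univ : fdel' u a Finset.univ = u := by
    unfold fdel' fdel
    rw [if_neg (erase_univ_nonempty hcard a).ne_empty]
  have hF3univ : fnab' t a Finset.univ = -t := by
    unfold fnab' fnab
    rw [if_pos (Finset.insert_eq_self.mpr (Finset.mem_univ a))]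
  have hfsluniv : fsl M a (k : ℝ) Finset.univ = frk M Finset.univ := by
    rw [fsl, if_pos (Finset.mem_univ a), min_eq_left (by linarith)]
  constructor
  · simp only
    rw [hQuniv, hfsluniv, hF2univ, hF3univ]; ring
  · intro S
    simp only
    by_cases haS : a ∈ S
    · have hfslS : fsl M a (k : ℝ) S
          = min (frk M S) (frk M (S.erase a) + (k : ℝ)) := by rw [fsl, if_pos haS]
      by_cases hSuniv : S = Finset.univ
      · subst hSuniv
        rw [hQuniv, hfsluniv, hF2univ, hF3univ]; linarith
      · have hF3 : fnab' t a S = 0 := by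
          unfold fnab' fnab
          rw [if_neg (by rw [Finset.insert_eq_self.mpr haS]; exact hSuniv)]
        by_cases hSa : S = {a}
        · subst hSa
          rw [Finset.sum_singleton, hqa, hfslS, Finset.erase_singleton, hfrk0, zero_add,
            min_eq_right hkhigh, hF3]
          have hF2 : fdel' u a {a} = 0 := by
            unfold fdel' fdel
            rw [Finset.erase_singleton, if_pos rfl]
          rw [hF2]; linarith
        · have hF2 : fdel' u a S = u := by
            unfold fdel' fdel
            rw [if_neg]
            intro h
            rcases (Finset.erase_eq_empty_iff S a).mp h with h | h
            · rw [h] at haS; exact absurd haS (Finset.notMem_empty a)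
            · exact hSa h
          have b1 := hQle S
          have b2 : ∑ i ∈ S, x i ≤ frk M (S.erase a) + (k : ℝ) + u := by
            have h5 := Finset.sum_erase_add S x haS
            have h6 := hQle (S.erase a)
            rw [hqa] at h5
            linarith
          rw [hfslS, hF2, hF3]
          rcases le_total (frk M S) (frk M (S.erase a) + (k : ℝ)) with h | h
          · rw [min_eq_left h]; linarith
          · rw [min_eq_right h]; linarith
    · have hfslS : fsl M a (k : ℝ) S
          = min (frk M S) (frk M (insert a S) - (k : ℝ)) := by rw [fsl, if_neg haS]
      by_cases hS0 : S = ∅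
      · subst hS0
        rw [Finset.sum_empty, hfslS, hfrk0]
        have hF2 : fdel' u a (∅ : Finset α) = 0 := by
          unfold fdel' fdel
          rw [if_pos (by simp)]
        have hF3 : fnab' t a (∅ : Finset α) = 0 := by
          unfold fnab' fnab
          rw [if_neg (by
            have : insert a (∅ : Finset α) = {a} := rfl
            rw [this]; exact singleton_ne_univ hcard a)]
        rw [hF2, hF3]
        have : (0 : ℝ) ≤ min (0 : ℝ) (frk M (insert a ∅) - (k : ℝ)) := by
          apply le_min le_rfl
          have : frk M (insert a (∅ : Finset α)) = frk M {a} := by norm_num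
          rw [this]; linarith
        linarith
      · have hF2 : fdel' u a S = u := by
          unfold fdel' fdel
          rw [Finset.erase_eq_of_notMem haS, if_neg hS0]
        have hins : ∑ i ∈ S, x i + (k : ℝ) = ∑ i ∈ insert a S, x i := by
          rw [Finset.sum_insert haS, ← hqa]; ring
        by_cases hSea : S = Finset.univ.erase a
        · have hF3 : fnab' t a S = -t := by
            unfold fnab' fnab
            rw [if_pos (by rw [hSea, Finset.insert_erase (Finset.mem_univ a)])]
          have hQS : ∑ i ∈ S, x i = frk M Finset.univ + u - t - (k : ℝ) := by
            have h5 : insert a S = Finset.univ := by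
              rw [hSea, Finset.insert_erase (Finset.mem_univ a)]
            rw [h5] at hins
            rw [← hQuniv, ← hins]; ring
          rw [hfslS, hF2, hF3, hQS]
          have h6 : insert a S = Finset.univ := by
            rw [hSea, Finset.insert_erase (Finset.mem_univ a)]
          rw [h6, hSea]
          rcases le_total (frk M (Finset.univ.erase a)) (frk M Finset.univ - (k : ℝ))
            with h | h
          · rw [min_eq_left h]; linarith
          · rw [min_eq_right h]; linarith
        · have hF3 : fnab' t a S = 0 := by
            unfold fnab' fnab
            rw [if_neg]
            intro h
            apply hSea
            have := congrArg (fun T => Finset.erase T a) h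
            rw [Finset.erase_insert haS] at this
            rw [this]
          have b1 := hQle S
          have b2 : ∑ i ∈ S, x i ≤ frk M (insert a S) - (k : ℝ) + u := by
            have h6 := hQle (insert a S)
            linarith [hins]
          rw [hfslS, hF2, hF3]
          rcases le_total (frk M S) (frk M (insert a S) - (k : ℝ)) with h | h
          · rw [min_eq_left h]; linarith
          · rw [min_eq_right h]; linarith

end ClaimA

section ClaimB
variable {α : Type*} [Fintype α] [DecidableEq α]

lemma claimA_high (M : PolyMatroid α) (a : α) (k : ℤ) {u t : ℝ} (hu : 0 ≤ u) (ht : 0 ≤ t)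
    (hcard : 2 ≤ Fintype.card α) (x p y z : α → ℝ)
    (hx : ∀ i, x i = p i + y i + z i)
    (hp1 : ∑ i, p i = frk M Finset.univ) (hp2 : ∀ S, ∑ i ∈ S, p i ≤ frk M S)
    (hy0 : ∀ i, 0 ≤ y i) (hyu : ∑ i, y i = u)
    (hz0 : ∀ i, z i ≤ 0) (hzt : ∑ i, z i = -t)
    (hklow : frk M Finset.univ - frk M (Finset.univ.erase a) ≤ (k : ℝ))
    (hkhigh : (k : ℝ) ≤ frk M {a})
    (hqa_ge : (k : ℝ) ≤ x a) (hpa : p a ≤ (k : ℝ)) :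
    x ∈ basePoly (fun S => fsl M a (k : ℝ) S + (fdel u S + fnab' t a S)) := by
  haveI : Nonempty α := Fintype.card_pos_iff.mp (by omega)
  have hxS : ∀ S : Finset α, ∑ i ∈ S, x i = ∑ i ∈ S, p i + ∑ i ∈ S, y i + ∑ i ∈ S, z i := by
    intro S
    rw [← Finset.sum_add_distrib, ← Finset.sum_add_distrib]
    exact Finset.sum_congr rfl fun i _ => hx i
  have hyS_le : ∀ S : Finset α, ∑ i ∈ S, y i ≤ u := by
    intro S
    rw [← hyu]
    exact Finset.sum_le_sum_of_subset_of_nonneg (Finset.subset_univ S) (fun i _ _ => hy0 i)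
  have hzS_np : ∀ S : Finset α, ∑ i ∈ S, z i ≤ 0 :=
    fun S => Finset.sum_nonpos (fun i _ => hz0 i)
  have hQle : ∀ S, ∑ i ∈ S, x i ≤ frk M S + u := by
    intro S
    have := hp2 S; have := hyS_le S; have := hzS_np S
    rw [hxS]; linarith
  have hQuniv : ∑ i, x i = frk M Finset.univ + u - t := by
    rw [hxS, hp1, hyu, hzt]; ring
  have hfrk0 : frk M ∅ = 0 := by unfold frk; rw [M.rk_empty]; norm_num
  have hF2univ : fdel (α := α) u Finset.univ = u := by
    unfold fdel
    rw [if_neg Finset.univ_nonempty.ne_empty]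
  have hF3univ : fnab' t a Finset.univ = -t := by
    unfold fnab' fnab
    rw [if_pos (Finset.insert_eq_self.mpr (Finset.mem_univ a))]
  have hfsluniv : fsl M a (k : ℝ) Finset.univ = frk M Finset.univ := by
    rw [fsl, if_pos (Finset.mem_univ a), min_eq_left (by linarith)]
  constructor
  · simp only
    rw [hQuniv, hfsluniv, hF2univ, hF3univ]; ring
  · intro S
    simp only
    by_cases haS : a ∈ S
    · have hfslS : fsl M a (k : ℝ) S
          = min (frk M S) (frk M (S.erase a) + (k : ℝ)) := by rw [fsl, if_pos haS]
      by_cases hSuniv : S = Finset.univ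
      · subst hSuniv
        rw [hQuniv, hfsluniv, hF2univ, hF3univ]; linarith
      · have hF3 : fnab' t a S = 0 := by
          unfold fnab' fnab
          rw [if_neg (by rw [Finset.insert_eq_self.mpr haS]; exact hSuniv)]
        have hF2 : fdel (α := α) u S = u := by
          unfold fdel
          rw [if_neg (by intro h; rw [h] at haS; exact absurd haS (Finset.notMem_empty a))]
        have b1 := hQle S
        have b2 : ∑ i ∈ S, x i ≤ frk M (S.erase a) + (k : ℝ) + u := by
          have h5 := Finset.sum_erase_add S p haS
          have h6 := hp2 (S.erase a)
          have h7 := hyS_le S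
          have h8 := hzS_np S
          rw [hxS]
          linarith
        rw [hfslS, hF2, hF3]
        rcases le_total (frk M S) (frk M (S.erase a) + (k : ℝ)) with h | h
        · rw [min_eq_left h]; linarith
        · rw [min_eq_right h]; linarith
    · have hfslS : fsl M a (k : ℝ) S
          = min (frk M S) (frk M (insert a S) - (k : ℝ)) := by rw [fsl, if_neg haS]
      by_cases hS0 : S = ∅
      · subst hS0
        rw [Finset.sum_empty, hfslS, hfrk0]
        have hF2 : fdel (α := α) u ∅ = 0 := by unfold fdel; rw [if_pos rfl]
        have hF3 : fnab' t a (∅ : Finset α) = 0 := by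
          unfold fnab' fnab
          rw [if_neg (by
            have h0 : insert a (∅ : Finset α) = {a} := rfl
            rw [h0]; exact singleton_ne_univ hcard a)]
        rw [hF2, hF3]
        have : (0 : ℝ) ≤ min (0 : ℝ) (frk M (insert a ∅) - (k : ℝ)) := by
          apply le_min le_rfl
          have h1 : frk M (insert a (∅ : Finset α)) = frk M {a} := by norm_num
          rw [h1]; linarith
        linarith
      · have hF2 : fdel (α := α) u S = u := by unfold fdel; rw [if_neg hS0]
        have hins : ∑ i ∈ S, x i + x a = ∑ i ∈ insert a S, x i := by
          rw [Finset.sum_insert haS]; ring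
        by_cases hSea : S = Finset.univ.erase a
        · have hF3 : fnab' t a S = -t := by
            unfold fnab' fnab
            rw [if_pos (by rw [hSea, Finset.insert_erase (Finset.mem_univ a)])]
          have hQS : ∑ i ∈ S, x i ≤ frk M Finset.univ + u - t - (k : ℝ) := by
            have h5 : insert a S = Finset.univ := by
              rw [hSea, Finset.insert_erase (Finset.mem_univ a)]
            rw [h5] at hins
            rw [hQuniv] at hins
            linarith
          rw [hfslS, hF2, hF3]
          have h6 : insert a S = Finset.univ := by
            rw [hSea, Finset.insert_erase (Finset.mem_univ a)]
          rw [h6, hSea]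
          rw [hSea] at hQS
          rcases le_total (frk M (Finset.univ.erase a)) (frk M Finset.univ - (k : ℝ))
            with h | h
          · rw [min_eq_left h]; linarith
          · rw [min_eq_right h]; linarith
        · have hF3 : fnab' t a S = 0 := by
            unfold fnab' fnab
            rw [if_neg]
            intro h
            apply hSea
            have := congrArg (fun T => Finset.erase T a) h
            rw [Finset.erase_insert haS] at this
            rw [this]
          have b1 := hQle S
          have b2 : ∑ i ∈ S, x i ≤ frk M (insert a S) - (k : ℝ) + u := by
            have h6 := hQle (insert a S)
            linarith [hins]
          rw [hfslS, hF2, hF3]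
          rcases le_total (frk M S) (frk M (insert a S) - (k : ℝ)) with h | h
          · rw [min_eq_left h]; linarith
          · rw [min_eq_right h]; linarith

lemma claimA_low (M : PolyMatroid α) (a : α) (k : ℤ) {u t : ℝ} (hu : 0 ≤ u) (ht : 0 ≤ t)
    (hcard : 2 ≤ Fintype.card α) (x p y z : α → ℝ)
    (hx : ∀ i, x i = p i + y i + z i)
    (hp1 : ∑ i, p i = frk M Finset.univ) (hp2 : ∀ S, ∑ i ∈ S, p i ≤ frk M S)
    (hy0 : ∀ i, 0 ≤ y i) (hyu : ∑ i, y i = u)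
    (hz0 : ∀ i, z i ≤ 0) (hzt : ∑ i, z i = -t)
    (hklow : frk M Finset.univ - frk M (Finset.univ.erase a) ≤ (k : ℝ))
    (hkhigh : (k : ℝ) ≤ frk M {a})
    (hqa_le : x a ≤ (k : ℝ)) (hpa : (k : ℝ) ≤ p a) :
    x ∈ basePoly (fun S => fsl M a (k : ℝ) S + (fdel' u a S + fnab t S)) := by
  haveI : Nonempty α := Fintype.card_pos_iff.mp (by omega)
  have hxS : ∀ S : Finset α, ∑ i ∈ S, x i = ∑ i ∈ S, p i + ∑ i ∈ S, y i + ∑ i ∈ S, z i := by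
    intro S
    rw [← Finset.sum_add_distrib, ← Finset.sum_add_distrib]
    exact Finset.sum_congr rfl fun i _ => hx i
  have hyS_le : ∀ S : Finset α, ∑ i ∈ S, y i ≤ u := by
    intro S
    rw [← hyu]
    exact Finset.sum_le_sum_of_subset_of_nonneg (Finset.subset_univ S) (fun i _ _ => hy0 i)
  have hyS_nn : ∀ S : Finset α, 0 ≤ ∑ i ∈ S, y i :=
    fun S => Finset.sum_nonneg (fun i _ => hy0 i)
  have hzS_np : ∀ S : Finset α, ∑ i ∈ S, z i ≤ 0 :=
    fun S => Finset.sum_nonpos (fun i _ => hz0 i)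
  have hQle : ∀ S, ∑ i ∈ S, x i ≤ frk M S + u := by
    intro S
    have := hp2 S; have := hyS_le S; have := hzS_np S
    rw [hxS]; linarith
  have hQuniv : ∑ i, x i = frk M Finset.univ + u - t := by
    rw [hxS, hp1, hyu, hzt]; ring
  have hfrk0 : frk M ∅ = 0 := by unfold frk; rw [M.rk_empty]; norm_num
  have hF2univ : fdel' u a Finset.univ = u := by
    unfold fdel' fdel
    rw [if_neg (erase_univ_nonempty hcard a).ne_empty]
  have hF3univ : fnab (α := α) t Finset.univ = -t := by
    unfold fnab; rw [if_pos rfl]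
  have hfsluniv : fsl M a (k : ℝ) Finset.univ = frk M Finset.univ := by
    rw [fsl, if_pos (Finset.mem_univ a), min_eq_left (by linarith)]
  constructor
  · simp only
    rw [hQuniv, hfsluniv, hF2univ, hF3univ]; ring
  · intro S
    simp only
    by_cases haS : a ∈ S
    · have hfslS : fsl M a (k : ℝ) S
          = min (frk M S) (frk M (S.erase a) + (k : ℝ)) := by rw [fsl, if_pos haS]
      by_cases hSuniv : S = Finset.univ
      · subst hSuniv
        rw [hQuniv, hfsluniv, hF2univ, hF3univ]; linarith
      · have hF3 : fnab (α := α) t S = 0 := by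
          unfold fnab; rw [if_neg hSuniv]
        by_cases hSa : S = {a}
        · subst hSa
          rw [Finset.sum_singleton, hfslS, Finset.erase_singleton, hfrk0, zero_add,
            min_eq_right hkhigh, hF3]
          have hF2 : fdel' u a {a} = 0 := by
            unfold fdel' fdel
            rw [Finset.erase_singleton, if_pos rfl]
          rw [hF2]; linarith
        · have hF2 : fdel' u a S = u := by
            unfold fdel' fdel
            rw [if_neg]
            intro h
            rcases (Finset.erase_eq_empty_iff S a).mp h with h | h
            · rw [h] at haS; exact absurd haS (Finset.notMem_empty a)
            · exact hSa h
          have b1 := hQle S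
          have b2 : ∑ i ∈ S, x i ≤ frk M (S.erase a) + (k : ℝ) + u := by
            have h5 := Finset.sum_erase_add S x haS
            have h6 := hQle (S.erase a)
            linarith
          rw [hfslS, hF2, hF3]
          rcases le_total (frk M S) (frk M (S.erase a) + (k : ℝ)) with h | h
          · rw [min_eq_left h]; linarith
          · rw [min_eq_right h]; linarith
    · have hfslS : fsl M a (k : ℝ) S
          = min (frk M S) (frk M (insert a S) - (k : ℝ)) := by rw [fsl, if_neg haS]
      have hSnu : S ≠ Finset.univ := by
        intro h; rw [h] at haS; exact haS (Finset.mem_univ a)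
      have hF3 : fnab (α := α) t S = 0 := by unfold fnab; rw [if_neg hSnu]
      by_cases hS0 : S = ∅
      · subst hS0
        rw [Finset.sum_empty, hfslS, hfrk0]
        have hF2 : fdel' u a (∅ : Finset α) = 0 := by
          unfold fdel' fdel
          rw [if_pos (by simp)]
        rw [hF2, hF3]
        have : (0 : ℝ) ≤ min (0 : ℝ) (frk M (insert a ∅) - (k : ℝ)) := by
          apply le_min le_rfl
          have h1 : frk M (insert a (∅ : Finset α)) = frk M {a} := by norm_num
          rw [h1]; linarith
        linarith
      · have hF2 : fdel' u a S = u := by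
          unfold fdel' fdel
          rw [Finset.erase_eq_of_notMem haS, if_neg hS0]
        have b1 := hQle S
        have b2 : ∑ i ∈ S, x i ≤ frk M (insert a S) - (k : ℝ) + u := by
          have h5 : ∑ i ∈ S, p i + p a = ∑ i ∈ insert a S, p i := by
            rw [Finset.sum_insert haS]; ring
          have h6 := hp2 (insert a S)
          have h7 := hyS_le S
          have h8 := hzS_np S
          rw [hxS]
          linarith
        rw [hfslS, hF2, hF3]
        rcases le_total (frk M S) (frk M (insert a S) - (k : ℝ)) with h | h
        · rw [min_eq_left h]; linarith
        · rw [min_eq_right h]; linarith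

end ClaimB

section Assemble
variable {α : Type*} [Fintype α] [DecidableEq α]

lemma fsl_empty (M : PolyMatroid α) (a : α) {k : ℝ} (hk : k ≤ frk M {a}) :
    fsl M a k ∅ = 0 := by
  rw [fsl, if_neg (Finset.notMem_empty a)]
  have h1 : frk M ∅ = 0 := by unfold frk; rw [M.rk_empty]; norm_num
  have h2 : insert a (∅ : Finset α) = {a} := rfl
  rw [h1, h2, min_eq_left (by linarith)]

lemma piece_subset (M : PolyMatroid α) (a : α) (k : ℤ) (hcard : 2 ≤ Fintype.card α)
    (hklow : frk M Finset.univ - frk M (Finset.univ.erase a) ≤ (k : ℝ))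
    (hkhigh : (k : ℝ) ≤ frk M {a})
    (F2 F3 : Finset α → ℝ) (hF2sub : Submod F2) (hF20 : F2 ∅ = 0)
    (hF3sub : Submod F3) (hF30 : F3 ∅ = 0)
    (D2 D3 : Set (α → ℝ)) (h2 : basePoly F2 ⊆ D2) (h3 : basePoly F3 ⊆ D3) :
    basePoly (fun S => fsl M a (k : ℝ) S + (F2 S + F3 S)) ⊆ M.slice a k + D2 + D3 := by
  haveI : Nonempty α := Fintype.card_pos_iff.mp (by omega)
  intro x hx
  have step1 := basePoly_add_subset (fsl M a (k : ℝ)) (fun S => F2 S + F3 S)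
    (fsl_submod M a (k : ℝ)) (fsl_empty M a hkhigh) (hF2sub.add hF3sub)
    (by rw [hF20, hF30]; ring) hx
  rcases step1 with ⟨x1, hx1, x23, hx23, hxe⟩
  have step2 := basePoly_add_subset F2 F3 hF2sub hF20 hF3sub hF30 hx23
  rcases step2 with ⟨x2, hx2, x3, hx3, hxe2⟩
  refine ⟨x1 + x2, ⟨x1, basePoly_fsl_subset_slice M a k hklow hkhigh hx1, x2, h2 hx2, rfl⟩,
    x3, h3 hx3, ?_⟩
  rw [← hxe, ← hxe2]
  funext i; simp; ring

lemma qa_ge_of_mem (M : PolyMatroid α) (a : α) (k : ℤ) {u t : ℝ} (hu : 0 ≤ u) (ht : 0 ≤ t)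
    {D : Set (α → ℝ)} (hD : D ⊆ stdSimplexSet α) {x : α → ℝ}
    (h : x ∈ M.slice a k + u • D + t • (-stdSimplexAway α a)) : (k : ℝ) ≤ x a := by
  rcases h with ⟨w, ⟨xp, hxp, y, hy, rfl⟩, z, hz, hxe⟩
  rcases hy with ⟨y', hy', rfl⟩
  have hy'Δ := (mem_stdSimplexSet_iff).mp (hD hy')
  have hza : z a = 0 := by
    rcases (mem_smul_neg_iff).mp hz with ⟨z', hz', hze⟩
    have hz'a := ((mem_stdSimplexAway_iff a).mp hz').2.2
    have : -z = t • z' := hze ▸ rfl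
    have h2 : z a = -(t * z' a) := by
      have := congrFun this a
      simp only [Pi.neg_apply, Pi.smul_apply, smul_eq_mul] at this
      linarith
    rw [h2, hz'a]; ring
  have hxa : x a = xp a + u * y' a + z a := by
    have := congrFun hxe a
    simp only [Pi.add_apply, Pi.smul_apply, smul_eq_mul] at this ⊢
    linarith [this]
  rw [hxa, hxp.2, hza]
  have := hy'Δ.1 a
  nlinarith

lemma qa_le_of_mem (M : PolyMatroid α) (a : α) (k : ℤ) {u t : ℝ} (hu : 0 ≤ u) (ht : 0 ≤ t)
    {D : Set (α → ℝ)} (hD : D ⊆ stdSimplexSet α) {x : α → ℝ}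
    (h : x ∈ M.slice a k + u • stdSimplexAway α a + t • (-D)) : x a ≤ (k : ℝ) := by
  rcases h with ⟨w, ⟨xp, hxp, y, hy, rfl⟩, z, hz, hxe⟩
  rcases hy with ⟨y', hy', rfl⟩
  have hy'a := ((mem_stdSimplexAway_iff a).mp hy').2.2
  have hza : z a ≤ 0 := by
    rcases (mem_smul_neg_iff).mp hz with ⟨z', hz', hze⟩
    have hz'Δ := (mem_stdSimplexSet_iff).mp (hD hz')
    have : -z = t • z' := hze ▸ rfl
    have h2 : z a = -(t * z' a) := by
      have := congrFun this a
      simp only [Pi.neg_apply, Pi.smul_apply, smul_eq_mul] at this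
      linarith
    rw [h2]
    nlinarith [hz'Δ.1 a]
  have hxa : x a = xp a + u * y' a + z a := by
    have := congrFun hxe a
    simp only [Pi.add_apply, Pi.smul_apply, smul_eq_mul] at this ⊢
    linarith [this]
  rw [hxa, hxp.2, hy'a]
  linarith

end Assemble

section Final
variable {α : Type*} [Fintype α] [DecidableEq α]

lemma fdel_empty {u : ℝ} : fdel (α := α) u ∅ = 0 := by unfold fdel; rw [if_pos rfl]

lemma fdel'_empty {u : ℝ} (a : α) : fdel' (α := α) u a ∅ = 0 := by
  unfold fdel' fdel; rw [if_pos (by simp)]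

lemma fnab_empty [Nonempty α] {t : ℝ} : fnab (α := α) t ∅ = 0 := by
  unfold fnab; rw [if_neg (Ne.symm Finset.univ_nonempty.ne_empty)]

lemma fnab'_empty (hcard : 2 ≤ Fintype.card α) {t : ℝ} (a : α) : fnab' (α := α) t a ∅ = 0 := by
  unfold fnab' fnab
  rw [if_neg (by
    have h0 : insert a (∅ : Finset α) = {a} := rfl
    rw [h0]; exact singleton_ne_univ hcard a)]

theorem stmt_15' {α : Type*} [Fintype α] [DecidableEq α] (hcard : 2 ≤ Fintype.card α)
    (M : PolyMatroid α) (a : α) (kl kh : ℤ)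
    (hkl : IsLeast {r : ℝ | ∃ x ∈ M.polytope, x a = r} (kl : ℝ))
    (hkh : IsGreatest {r : ℝ | ∃ x ∈ M.polytope, x a = r} (kh : ℝ))
    (hlt : kl < kh) (t u : ℕ) :
    Set.PairwiseDisjoint (↑(Finset.Icc kl kh) : Set ℤ)
      (fun k => {q : α → ℤ | (fun i => (q i : ℝ)) ∈
        M.slice a k +
          (u : ℝ) • (if k = kh then stdSimplexSet α else stdSimplexAway α a) +
          (t : ℝ) • (-(if k = kl then stdSimplexSet α else stdSimplexAway α a))}) ∧
    (⋃ k ∈ Finset.Icc kl kh,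
      {q : α → ℤ | (fun i => (q i : ℝ)) ∈
        M.slice a k +
          (u : ℝ) • (if k = kh then stdSimplexSet α else stdSimplexAway α a) +
          (t : ℝ) • (-(if k = kl then stdSimplexSet α else stdSimplexAway α a))}) =
      {q : α → ℤ | (fun i => (q i : ℝ)) ∈
        M.polytope + (u : ℝ) • stdSimplexSet α + (t : ℝ) • (-stdSimplexSet α)} := by
  haveI : Nonempty α := Fintype.card_pos_iff.mp (by omega)
  have hu : (0 : ℝ) ≤ (u : ℝ) := Nat.cast_nonneg u
  have ht : (0 : ℝ) ≤ (t : ℝ) := Nat.cast_nonneg t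
  have khbound : (kh : ℝ) ≤ frk M {a} := by
    obtain ⟨w, hw, hwa⟩ := hkh.1
    have h1 : w a = ∑ i ∈ ({a} : Finset α), w i := (Finset.sum_singleton w a).symm
    have h2 := hw.2 {a}
    rw [hwa] at h1
    rw [h1]
    exact h2
  have klbound : frk M Finset.univ - frk M (Finset.univ.erase a) ≤ (kl : ℝ) := by
    obtain ⟨w, hw, hwa⟩ := hkl.1
    have h1 : ∑ i ∈ Finset.univ.erase a, w i + w a = ∑ i, w i :=
      Finset.sum_erase_add _ _ (Finset.mem_univ a)
    have h2 := hw.2 (Finset.univ.erase a)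
    have h3 := hw.1
    rw [hwa] at h1
    unfold frk
    rw [← h3]
    linarith
  constructor
  · -- disjointness
    have key : ∀ j k : ℤ, j ∈ Finset.Icc kl kh → k ∈ Finset.Icc kl kh → j < k →
        Disjoint
          {q : α → ℤ | (fun i => (q i : ℝ)) ∈ M.slice a j +
            (u : ℝ) • (if j = kh then stdSimplexSet α else stdSimplexAway α a) +
            (t : ℝ) • (-(if j = kl then stdSimplexSet α else stdSimplexAway α a))}
          {q : α → ℤ | (fun i => (q i : ℝ)) ∈ M.slice a k +
            (u : ℝ) • (if k = kh then stdSimplexSet α else stdSimplexAway α a) +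
            (t : ℝ) • (-(if k = kl then stdSimplexSet α else stdSimplexAway α a))} := by
      intro j k hj hk hjk
      rw [Finset.mem_Icc] at hj hk
      rw [Set.disjoint_left]
      intro q hqj hqk
      rw [Set.mem_setOf_eq] at hqj hqk
      have hjne : j ≠ kh := by omega
      have hkne : k ≠ kl := by omega
      rw [if_neg hjne] at hqj
      rw [if_neg hkne] at hqk
      have hle : (fun i => (q i : ℝ)) a ≤ (j : ℝ) := by
        apply qa_le_of_mem M a j hu ht
          (D := if j = kl then stdSimplexSet α else stdSimplexAway α a) ?_ hqj
        split_ifs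
        · exact Set.Subset.rfl
        · exact stdSimplexAway_subset a
      have hge : (k : ℝ) ≤ (fun i => (q i : ℝ)) a := by
        apply qa_ge_of_mem M a k hu ht
          (D := if k = kh then stdSimplexSet α else stdSimplexAway α a) ?_ hqk
        split_ifs
        · exact Set.Subset.rfl
        · exact stdSimplexAway_subset a
      have : (j : ℝ) < (k : ℝ) := by exact_mod_cast hjk
      linarith
    intro j hj k hk hjk
    rcases lt_or_gt_of_ne hjk with h | h
    · exact key j k (by exact_mod_cast hj) (by exact_mod_cast hk) h
    · exact (key k j (by exact_mod_cast hk) (by exact_mod_cast hj) h).symm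
  · -- the union
    apply Set.Subset.antisymm
    · -- easy direction: each piece is contained in the whole
      apply Set.iUnion₂_subset
      intro k hk q hq
      rw [Set.mem_setOf_eq] at hq ⊢
      have hsub : M.slice a k +
          (u : ℝ) • (if k = kh then stdSimplexSet α else stdSimplexAway α a) +
          (t : ℝ) • (-(if k = kl then stdSimplexSet α else stdSimplexAway α a)) ⊆
          M.polytope + (u : ℝ) • stdSimplexSet α + (t : ℝ) • (-stdSimplexSet α) := by
        apply Set.add_subset_add
        apply Set.add_subset_add
        · exact fun x hx => hx.1
        · apply Set.smul_set_mono
          split_ifs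
          · exact Set.Subset.rfl
          · exact stdSimplexAway_subset a
        · apply Set.smul_set_mono
          apply Set.neg_subset_neg.mpr
          split_ifs
          · exact Set.Subset.rfl
          · exact stdSimplexAway_subset a
      exact hsub hq
    · -- hard direction
      intro q hq
      rw [Set.mem_setOf_eq] at hq
      rcases hq with ⟨w, hw, z, hz, hxe⟩
      rcases hw with ⟨p, hp, y, hy, rfl⟩
      set x : α → ℝ := fun i => (q i : ℝ) with hxdef
      have hyf := (mem_smul_stdSimplexSet hu).mp hy
      have hzf := (mem_smul_stdSimplexSet ht).mp ((mem_smul_neg_iff).mp hz)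
      have hz0 : ∀ i, z i ≤ 0 := by
        intro i
        have := hzf.1 i
        simp only [Pi.neg_apply] at this
        linarith
      have hzt : ∑ i, z i = -(t : ℝ) := by
        have h1 := hzf.2
        have h2 : ∑ i, (-z) i = -∑ i, z i := by
          simp [Finset.sum_neg_distrib]
        rw [h2] at h1
        linarith
      have hx : ∀ i, x i = p i + y i + z i := by
        intro i
        have := congrFun hxe i
        simp only [Pi.add_apply] at this
        exact this.symm
      have hp1 : ∑ i, p i = frk M Finset.univ := hp.1
      have hp2 : ∀ S, ∑ i ∈ S, p i ≤ frk M S := hp.2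
      have hpab : (kl : ℝ) ≤ p a := hkl.2 ⟨p, hp, rfl⟩
      have hpat : p a ≤ (kh : ℝ) := hkh.2 ⟨p, hp, rfl⟩
      have hxa : x a = ((q a : ℤ) : ℝ) := rfl
      rw [Set.mem_iUnion₂]
      rcases le_or_gt kh (q a) with hcase | hcase
      · -- high case : k = kh
        refine ⟨kh, Finset.mem_Icc.mpr ⟨hlt.le, le_refl kh⟩, ?_⟩
        rw [Set.mem_setOf_eq, if_pos rfl, if_neg (by omega)]
        have hklow' : frk M Finset.univ - frk M (Finset.univ.erase a) ≤ (kh : ℝ) := by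
          have : (kl : ℝ) ≤ (kh : ℝ) := by exact_mod_cast hlt.le
          linarith
        have hA := claimA_high M a kh hu ht hcard x p y z hx hp1 hp2 hyf.1 hyf.2 hz0 hzt
          hklow' khbound (by rw [hxa]; exact_mod_cast hcase) hpat
        exact piece_subset M a kh hcard hklow' khbound (fdel (u : ℝ)) (fnab' (t : ℝ) a)
          (fdel_submod hu) fdel_empty (fnab'_submod ht a) (fnab'_empty hcard a)
          _ _ (basePoly_fdel_subset hcard hu) (basePoly_fnab'_subset hcard a ht) hA
      · rcases le_or_gt (q a) kl with hcase2 | hcase2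
        · -- low case : k = kl
          refine ⟨kl, Finset.mem_Icc.mpr ⟨le_refl kl, hlt.le⟩, ?_⟩
          rw [Set.mem_setOf_eq, if_neg (by omega), if_pos rfl]
          have hkhigh' : (kl : ℝ) ≤ frk M {a} := by
            have : (kl : ℝ) ≤ (kh : ℝ) := by exact_mod_cast hlt.le
            linarith
          have hA := claimA_low M a kl hu ht hcard x p y z hx hp1 hp2 hyf.1 hyf.2 hz0 hzt
            klbound hkhigh' (by rw [hxa]; exact_mod_cast hcase2) hpab
          exact piece_subset M a kl hcard klbound hkhigh' (fdel' (u : ℝ) a) (fnab (t : ℝ))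
            (fdel'_submod hu a) (fdel'_empty a) (fnab_submod ht) fnab_empty
            _ _ (basePoly_fdel'_subset hcard a hu) (basePoly_fnab_subset hcard ht) hA
        · -- middle case : k = q a
          refine ⟨q a, Finset.mem_Icc.mpr ⟨hcase2.le, hcase.le⟩, ?_⟩
          rw [Set.mem_setOf_eq, if_neg (by omega), if_neg (by omega)]
          have hklow' : frk M Finset.univ - frk M (Finset.univ.erase a) ≤ ((q a : ℤ) : ℝ) := by
            have : (kl : ℝ) ≤ ((q a : ℤ) : ℝ) := by exact_mod_cast hcase2.le
            linarith
          have hkhigh' : ((q a : ℤ) : ℝ) ≤ frk M {a} := by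
            have : ((q a : ℤ) : ℝ) ≤ (kh : ℝ) := by exact_mod_cast hcase.le
            linarith
          have hA := claimA_mid M a (q a) hu ht hcard x p y z hx hp1 hp2 hyf.1 hyf.2 hz0 hzt
            hklow' hkhigh' hxa
          exact piece_subset M a (q a) hcard hklow' hkhigh' (fdel' (u : ℝ) a) (fnab' (t : ℝ) a)
            (fdel'_submod hu a) (fdel'_empty a) (fnab'_submod ht a) (fnab'_empty hcard a)
            _ _ (basePoly_fdel'_subset hcard a hu) (basePoly_fnab'_subset hcard a ht) hA

end Final

end AuxDev

/-- The lattice points of `P(M) + uΔ + t∇` are the disjoint union,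
over `k̲ ≤ k ≤ k̄`, of the lattice points of `N_k̄ + uΔ + t∇'`, of
`N_k + uΔ' + t∇'` for `k̲ < k < k̄`, and of `N_k̲ + uΔ' + t∇`. -/
theorem stmt_15 {α : Type*} [Fintype α] [DecidableEq α] (hcard : 2 ≤ Fintype.card α)
    (M : PolyMatroid α) (a : α) (kl kh : ℤ)
    (hkl : IsLeast {r : ℝ | ∃ x ∈ M.polytope, x a = r} (kl : ℝ))
    (hkh : IsGreatest {r : ℝ | ∃ x ∈ M.polytope, x a = r} (kh : ℝ))
    (hlt : kl < kh) (t u : ℕ) :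
    Set.PairwiseDisjoint (↑(Finset.Icc kl kh) : Set ℤ)
      (fun k => {q : α → ℤ | (fun i => (q i : ℝ)) ∈
        M.slice a k +
          (u : ℝ) • (if k = kh then stdSimplexSet α else stdSimplexAway α a) +
          (t : ℝ) • (-(if k = kl then stdSimplexSet α else stdSimplexAway α a))}) ∧
    (⋃ k ∈ Finset.Icc kl kh,
      {q : α → ℤ | (fun i => (q i : ℝ)) ∈
        M.slice a k +
          (u : ℝ) • (if k = kh then stdSimplexSet α else stdSimplexAway α a) +
          (t : ℝ) • (-(if k = kl then stdSimplexSet α else stdSimplexAway α a))}) =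
      {q : α → ℤ | (fun i => (q i : ℝ)) ∈
        M.polytope + (u : ℝ) • stdSimplexSet α + (t : ℝ) • (-stdSimplexSet α)} :=
  stmt_15' hcard M a kl kh hkl hkh hlt t u

end
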